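/- arXiv:2108.11074 — 3 statements merged into one kernel-verified Lean document; each statement's English description precedes it below -/
import Mathlib

section
/- For real numbers 0 < q ≤ r and every a > 0, the CDF of the chi-squared distribution with r degrees of freedom at a is at most the CDF of the chi-squared distribution with q degrees of freedom at a; equivalently, the regularized lower incomplete gamma function P_G(s, a) is nonincreasing in the shape parameter s > 0 for each fixed a > 0. -/
open MeasureTheory Filter Finset
open scoped BigOperators Topology ENNReal NNReal Classical

namespace DIG

/-- Extended-real logarithm: `⊥` on nonpositive reals, so that the log-likelihood of an
impossible observation is `-∞`. -/
noncomputable def elog (x : ℝ) : EReal := if x ≤ 0 then (⊥ : EReal) else ((Real.log x : ℝ) : EReal)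

/-- A block of length `L` over the alphabet `𝒳`. -/
abbrev Blk (𝒳 : Type*) (L : ℕ) : Type _ := Fin L → 𝒳

/-- A joint history of the three processes: three `k`-blocks. -/
abbrev Hist (𝒳 : Type*) (k : ℕ) : Type _ := Blk 𝒳 k × Blk 𝒳 k × Blk 𝒳 k

/-- A joint symbol of the three processes. -/
abbrev Sym (𝒳 : Type*) : Type _ := 𝒳 × 𝒳 × 𝒳

variable {𝒳 : Type*} [Fintype 𝒳] [DecidableEq 𝒳] [Nonempty 𝒳]
variable {Ω : Type*} [MeasurableSpace Ω]

/-- The real-valued measure of a set. -/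
noncomputable def mreal (μ : MeasureTheory.Measure Ω) (s : Set Ω) : ℝ := (μ s).toReal

/-- Kullback-Leibler divergence between two pmfs on a finite set (with the usual
`0 log 0 = 0` convention, automatic since `0 * x = 0`). -/
noncomputable def KLfin {S : Type*} [Fintype S] (p q : S → ℝ) : ℝ :=
  ∑ s, p s * Real.log (p s / q s)

/-- Shannon entropy of a pmf on a finite set. -/
noncomputable def Hent {S : Type*} [Fintype S] (p : S → ℝ) : ℝ :=
  -∑ s, p s * Real.log (p s)

/-- Pushforward (marginal) of a pmf along a map of finite sets. -/
noncomputable def pushf {S T : Type*} [Fintype S] [DecidableEq T] (g : S → T) (p : S → ℝ) :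
    T → ℝ := fun t => ∑ s, if g s = t then p s else 0

/-! ### Marginals of a joint distribution of `(k+1)`-blocks of three processes -/

/-- Marginal of `(Y₁ᵏ, Z₁ᵏ⁺¹)`. -/
noncomputable def margYkZ {k : ℕ} (p : Blk 𝒳 (k+1) → Blk 𝒳 (k+1) → Blk 𝒳 (k+1) → ℝ)
    (β : Blk 𝒳 k) (c : Blk 𝒳 (k+1)) : ℝ :=
  ∑ a : Blk 𝒳 (k+1), ∑ yl : 𝒳, p a (Fin.snoc β yl) c

/-- Marginal of `(Y₁ᵏ⁺¹, Z₁ᵏ⁺¹)`. -/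
noncomputable def margYZ {k : ℕ} (p : Blk 𝒳 (k+1) → Blk 𝒳 (k+1) → Blk 𝒳 (k+1) → ℝ)
    (b c : Blk 𝒳 (k+1)) : ℝ :=
  ∑ a : Blk 𝒳 (k+1), p a b c

/-- Marginal of `(X₁ᵏ⁺¹, Y₁ᵏ, Z₁ᵏ⁺¹)`. -/
noncomputable def margXYkZ {k : ℕ} (p : Blk 𝒳 (k+1) → Blk 𝒳 (k+1) → Blk 𝒳 (k+1) → ℝ)
    (a : Blk 𝒳 (k+1)) (β : Blk 𝒳 k) (c : Blk 𝒳 (k+1)) : ℝ :=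
  ∑ yl : 𝒳, p a (Fin.snoc β yl) c

/-- Marginal of `(X₁ᵏ, Y₁ᵏ, Z₁ᵏ)` (the first `k` coordinates of each block). -/
noncomputable def margK {k : ℕ} (p : Blk 𝒳 (k+1) → Blk 𝒳 (k+1) → Blk 𝒳 (k+1) → ℝ)
    (α β γ : Blk 𝒳 k) : ℝ :=
  ∑ xl : 𝒳, ∑ yl : 𝒳, ∑ zl : 𝒳, p (Fin.snoc α xl) (Fin.snoc β yl) (Fin.snoc γ zl)

/-- Conditional mutual information `I(Y_{k+1}; X₁ᵏ⁺¹ | Y₁ᵏ, Z₁ᵏ⁺¹)` computed under the joint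
pmf `p` of the three `(k+1)`-blocks. -/
noncomputable def condMI {k : ℕ} (p : Blk 𝒳 (k+1) → Blk 𝒳 (k+1) → Blk 𝒳 (k+1) → ℝ) : ℝ :=
  ∑ a : Blk 𝒳 (k+1), ∑ b : Blk 𝒳 (k+1), ∑ c : Blk 𝒳 (k+1),
    p a b c * Real.log ((p a b c * margYkZ p (Fin.init b) c) /
      (margYZ p b c * margXYkZ p a (Fin.init b) c))

/-! ### Transition matrices and factorization (absence of the edge `X → Y`) -/

/-- `Q` is a transition probability matrix for the joint `k`-th order Markov process. -/
def IsTransMat {k : ℕ} (Q : Hist 𝒳 k → Sym 𝒳 → ℝ) : Prop :=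
  (∀ h s, 0 ≤ Q h s) ∧ (∀ h, ∑ s : Sym 𝒳, Q h s = 1)

/-- The factorization of the transition matrix expressing the absence of the edge `X → Y`:
`Q(x',y',z' | hx,hy,hz) = Q1(x',z' | hx,hy,hz) · Q2(y' | hy, (hz,z'))`. -/
def IsFactorized {k : ℕ} (Q : Hist 𝒳 k → Sym 𝒳 → ℝ) : Prop :=
  ∃ (Q1 : Hist 𝒳 k → 𝒳 × 𝒳 → ℝ) (Q2 : Blk 𝒳 k × Blk 𝒳 (k+1) → 𝒳 → ℝ),
    (∀ h p, 0 ≤ Q1 h p) ∧ (∀ h, ∑ p : 𝒳 × 𝒳, Q1 h p = 1) ∧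
    (∀ h y, 0 ≤ Q2 h y) ∧ (∀ h, ∑ y : 𝒳, Q2 h y = 1) ∧
    (∀ (hx hy hz : Blk 𝒳 k) (x' y' z' : 𝒳),
      Q (hx, hy, hz) (x', y', z') = Q1 (hx, hy, hz) (x', z') * Q2 (hy, Fin.snoc hz z') y')

/-! ### The process, stationarity, Markov property, Assumption 3 -/

/-- The event that the length-`L` blocks of the three processes starting at time `t`
equal `(a, b, c)`. -/
def blockEvent (X Y Z : ℕ → Ω → 𝒳) (t L : ℕ) (a b c : Blk 𝒳 L) : Set Ω :=
  {ω | ∀ i : Fin L, X (t + i) ω = a i ∧ Y (t + i) ω = b i ∧ Z (t + i) ω = c i}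

/-- Joint stationarity of the three processes. -/
def Stationary (μ : MeasureTheory.Measure Ω) (X Y Z : ℕ → Ω → 𝒳) : Prop :=
  ∀ (t L : ℕ) (a b c : Blk 𝒳 L),
    μ (blockEvent X Y Z t L a b c) = μ (blockEvent X Y Z 0 L a b c)

/-- The joint process is Markov of order `k` with transition matrix `Q`: conditionally on the
entire past, the next joint symbol is distributed according to `Q` applied to the last
`k`-block of the past. -/
def MarkovOfOrder (μ : MeasureTheory.Measure Ω) (X Y Z : ℕ → Ω → 𝒳) (k : ℕ)
    (Q : Hist 𝒳 k → Sym 𝒳 → ℝ) : Prop :=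
  ∀ (j : ℕ) (pa pb pc : Blk 𝒳 j) (a b c : Blk 𝒳 k) (s : Sym 𝒳),
    mreal μ (blockEvent X Y Z 0 j pa pb pc ∩ blockEvent X Y Z j k a b c ∩
        {ω | X (j + k) ω = s.1 ∧ Y (j + k) ω = s.2.1 ∧ Z (j + k) ω = s.2.2})
      = Q (a, b, c) s *
        mreal μ (blockEvent X Y Z 0 j pa pb pc ∩ blockEvent X Y Z j k a b c)

/-- Assumption 3: `Y_{k+1}` is conditionally independent of the past `(Y₋∞⁰, Z₋∞⁰)` given
`(Y₁ᵏ, Z₁ᵏ⁺¹)` (stated at every time shift `j`, which by stationarity is the one-sided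
form of the two-sided statement). -/
def CondIndepPast (μ : MeasureTheory.Measure Ω) (X Y Z : ℕ → Ω → 𝒳) (k : ℕ) : Prop :=
  ∀ (j : ℕ) (py pz : Blk 𝒳 j) (b : Blk 𝒳 k) (c : Blk 𝒳 (k+1)) (y : 𝒳),
    mreal μ ({ω | Y (j + k) ω = y} ∩
        {ω | (∀ i : Fin k, Y (j + i) ω = b i) ∧ (∀ i : Fin (k+1), Z (j + i) ω = c i)} ∩
        {ω | ∀ i : Fin j, Y i ω = py i ∧ Z i ω = pz i}) *
      mreal μ {ω | (∀ i : Fin k, Y (j + i) ω = b i) ∧ (∀ i : Fin (k+1), Z (j + i) ω = c i)}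
    = mreal μ ({ω | Y (j + k) ω = y} ∩
        {ω | (∀ i : Fin k, Y (j + i) ω = b i) ∧ (∀ i : Fin (k+1), Z (j + i) ω = c i)}) *
      mreal μ ({ω | (∀ i : Fin k, Y (j + i) ω = b i) ∧ (∀ i : Fin (k+1), Z (j + i) ω = c i)} ∩
        {ω | ∀ i : Fin j, Y i ω = py i ∧ Z i ω = pz i})

/-- Measurability of the elementary events of the process. -/
def MeasProc (X Y Z : ℕ → Ω → 𝒳) : Prop :=
  ∀ (i : ℕ) (x : 𝒳), MeasurableSet {ω | X i ω = x} ∧ MeasurableSet {ω | Y i ω = x} ∧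
    MeasurableSet {ω | Z i ω = x}

/-! ### Empirical distribution, plug-in directed information, log-likelihoods -/

/-- Empirical distribution of `(k+1)`-blocks of three sample sequences of length `n`. -/
noncomputable def empDistSeq (x y z : ℕ → 𝒳) (k n : ℕ) (a b c : Blk 𝒳 (k+1)) : ℝ :=
  ((n - k : ℕ) : ℝ)⁻¹ * ∑ t ∈ Finset.range (n - k),
    if ∀ i : Fin (k+1), x (t + i) = a i ∧ y (t + i) = b i ∧ z (t + i) = c i then 1 else 0

/-- Empirical distribution of `(k+1)`-blocks of the three processes (random). -/
noncomputable def empDist (X Y Z : ℕ → Ω → 𝒳) (k n : ℕ) (a b c : Blk 𝒳 (k+1)) (ω : Ω) : ℝ :=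
  empDistSeq (fun i => X i ω) (fun i => Y i ω) (fun i => Z i ω) k n a b c

/-- The stationary `(k+1)`-block distribution `P̄`. -/
noncomputable def statDist (μ : MeasureTheory.Measure Ω) (X Y Z : ℕ → Ω → 𝒳) (k : ℕ)
    (a b c : Blk 𝒳 (k+1)) : ℝ :=
  mreal μ (blockEvent X Y Z 0 (k+1) a b c)

/-- Plug-in estimator of the directed information:
`Î_n^{(k)}(X→Y‖Z) = I(Ŷ_{k+1}; X̂₁ᵏ⁺¹ | Ŷ₁ᵏ, Ẑ₁ᵏ⁺¹)` under the empirical distribution. -/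
noncomputable def empMI (X Y Z : ℕ → Ω → 𝒳) (k n : ℕ) (ω : Ω) : ℝ :=
  condMI (fun a b c => empDist X Y Z k n a b c ω)

/-- Log-likelihood (extended-real valued) of the samples under transition matrix `Q`. -/
noncomputable def loglikSeq {k : ℕ} (Q : Hist 𝒳 k → Sym 𝒳 → ℝ) (x y z : ℕ → 𝒳) (n : ℕ) :
    EReal :=
  ∑ i ∈ Finset.Ico k n,
    elog (Q (fun j : Fin k => x (i - k + j), fun j : Fin k => y (i - k + j),
      fun j : Fin k => z (i - k + j)) (x i, y i, z i))

/-- Log-likelihood of the process samples under transition matrix `Q`. -/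
noncomputable def loglik {k : ℕ} (Q : Hist 𝒳 k → Sym 𝒳 → ℝ) (X Y Z : ℕ → Ω → 𝒳) (n : ℕ)
    (ω : Ω) : EReal :=
  loglikSeq Q (fun i => X i ω) (fun i => Y i ω) (fun i => Z i ω) n

/-- The Neyman–Pearson log-likelihood ratio `Λ_{xy,n}`: the maximal log-likelihood over all
transition matrices minus the maximal log-likelihood over the factorized (null-hypothesis)
transition matrices. -/
noncomputable def Lambda (X Y Z : ℕ → Ω → 𝒳) (k n : ℕ) (ω : Ω) : EReal :=
  sSup {L : EReal | ∃ Q : Hist 𝒳 k → Sym 𝒳 → ℝ, IsTransMat Q ∧ L = loglik Q X Y Z n ω} -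
  sSup {L : EReal | ∃ Q : Hist 𝒳 k → Sym 𝒳 → ℝ, IsTransMat Q ∧ IsFactorized Q ∧
    L = loglik Q X Y Z n ω}

/-! ### Chi-squared distribution and convergence in distribution -/

/-- The chi-squared distribution with `f` degrees of freedom: the Gamma distribution with
shape `f/2` and rate `1/2`. -/
noncomputable def chiSq (f : ℝ) : MeasureTheory.Measure ℝ :=
  ProbabilityTheory.gammaMeasure (f / 2) (1 / 2)

/-- `W n` converges in distribution (weakly) to `ν` as `n → ∞`. -/
def TendstoInDist (μ : MeasureTheory.Measure Ω) (W : ℕ → Ω → ℝ)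
    (ν : MeasureTheory.Measure ℝ) : Prop :=
  ∀ f : BoundedContinuousFunction ℝ ℝ,
    Tendsto (fun n => ∫ ω, f (W n ω) ∂μ) atTop (𝓝 (∫ x, f x ∂ν))

/-- Conditional mutual information `I(U; V | W)` of finitely-valued random variables. -/
noncomputable def cmiRV {A B C : Type*} [Fintype A] [Fintype B] [Fintype C]
    [DecidableEq A] [DecidableEq B] [DecidableEq C]
    (μ : MeasureTheory.Measure Ω) (U : Ω → A) (V : Ω → B) (W : Ω → C) : ℝ :=
  ∑ a : A, ∑ b : B, ∑ c : C,
    mreal μ {ω | U ω = a ∧ V ω = b ∧ W ω = c} *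
      Real.log ((mreal μ {ω | U ω = a ∧ V ω = b ∧ W ω = c} * mreal μ {ω | W ω = c}) /
        (mreal μ {ω | U ω = a ∧ W ω = c} * mreal μ {ω | V ω = b ∧ W ω = c}))

end DIG

namespace DIG

open ProbabilityTheory Real in
/-- Pointwise comparison of gamma densities with the same rate: for `x > 0`, the density
with the larger shape is below the one with the smaller shape iff `x ^ (s₂ - s₁)` is at most
an explicit constant. -/
lemma gammaPDFReal_le_iff {s₁ s₂ ρ x : ℝ} (h1 : 0 < s₁) (h12 : s₁ < s₂) (hρ : 0 < ρ)
    (hx : 0 < x) :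
    gammaPDFReal s₂ ρ x ≤ gammaPDFReal s₁ ρ x ↔
      x ^ (s₂ - s₁) ≤ ρ ^ s₁ * Gamma s₂ / (ρ ^ s₂ * Gamma s₁) := by
  have hG1 := Gamma_pos_of_pos h1
  have hG2 := Gamma_pos_of_pos (h1.trans h12)
  have hρ2 : (0:ℝ) < ρ ^ s₂ := rpow_pos_of_pos hρ _
  have hx1 : (0:ℝ) < x ^ (s₁ - 1) := rpow_pos_of_pos hx _
  have hsplit : x ^ (s₂ - 1) = x ^ (s₁ - 1) * x ^ (s₂ - s₁) := by
    rw [← rpow_add hx]; ring_nf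
  rw [gammaPDFReal, gammaPDFReal, if_pos hx.le, if_pos hx.le,
    mul_le_mul_iff_of_pos_right (exp_pos _), hsplit, div_mul_eq_mul_div, div_mul_eq_mul_div,
    div_le_div_iff₀ hG2 hG1, le_div_iff₀ (mul_pos hρ2 hG1),
    show ρ ^ s₂ * (x ^ (s₁ - 1) * x ^ (s₂ - s₁)) * Gamma s₁
        = (x ^ (s₂ - s₁) * (ρ ^ s₂ * Gamma s₁)) * x ^ (s₁ - 1) by ring,
    show ρ ^ s₁ * x ^ (s₁ - 1) * Gamma s₂ = (ρ ^ s₁ * Gamma s₂) * x ^ (s₁ - 1) by ring,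
    mul_le_mul_iff_of_pos_right hx1]

open ProbabilityTheory Real in
/-- The gamma CDF (as an `ℝ≥0∞`-valued measure of `Iic a`) is antitone in the shape
parameter, for a fixed rate. -/
lemma gammaMeasure_Iic_anti {s₁ s₂ ρ : ℝ} (h1 : 0 < s₁) (h12 : s₁ ≤ s₂) (hρ : 0 < ρ)
    (a : ℝ) : gammaMeasure s₂ ρ (Set.Iic a) ≤ gammaMeasure s₁ ρ (Set.Iic a) := by
  rcases eq_or_lt_of_le h12 with rfl | h12
  · exact le_rfl
  have h2 : 0 < s₂ := h1.trans h12
  have hδ : 0 < s₂ - s₁ := sub_pos.mpr h12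
  set K : ℝ := ρ ^ s₁ * Gamma s₂ / (ρ ^ s₂ * Gamma s₁) with hKdef
  have hK : 0 < K := by
    apply div_pos <;>
      exact mul_pos (rpow_pos_of_pos hρ _) (Gamma_pos_of_pos (by assumption))
  set x₀ : ℝ := K ^ (s₂ - s₁)⁻¹ with hx₀def
  have hx₀ : 0 < x₀ := rpow_pos_of_pos hK _
  have h0 : ∀ᵐ x : ℝ, x ≠ (0:ℝ) := by
    rw [ae_iff]
    simpa using Real.volume_singleton (a := (0:ℝ))
  rcases le_total a x₀ with hax | hax
  · -- on `Iic a ⊆ Iic x₀` the larger-shape density is smaller (a.e.)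
    rw [gammaMeasure, gammaMeasure, withDensity_apply _ measurableSet_Iic,
      withDensity_apply _ measurableSet_Iic]
    apply setLIntegral_mono_ae' measurableSet_Iic
    filter_upwards [h0] with x hx0 hxa
    refine ENNReal.ofReal_le_ofReal ?_
    rcases lt_or_gt_of_ne hx0 with hneg | hpos
    · rw [gammaPDFReal, gammaPDFReal, if_neg (not_le.mpr hneg), if_neg (not_le.mpr hneg)]
    · refine (gammaPDFReal_le_iff h1 h12 hρ hpos).mpr ?_
      have : x ≤ K ^ (s₂ - s₁)⁻¹ := le_trans hxa hax
      exact (Real.le_rpow_inv_iff_of_pos hpos.le hK.le hδ).mp this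
  · -- on `Ioi a ⊆ Ioi x₀` the larger-shape density is bigger; pass to complements
    haveI hP1 : IsProbabilityMeasure (gammaMeasure s₁ ρ) := isProbabilityMeasure_gammaMeasure h1 hρ
    haveI hP2 : IsProbabilityMeasure (gammaMeasure s₂ ρ) := isProbabilityMeasure_gammaMeasure h2 hρ
    have hIoi : gammaMeasure s₁ ρ (Set.Ioi a) ≤ gammaMeasure s₂ ρ (Set.Ioi a) := by
      rw [gammaMeasure, gammaMeasure, withDensity_apply _ measurableSet_Ioi,
        withDensity_apply _ measurableSet_Ioi]
      apply setLIntegral_mono_ae' measurableSet_Ioi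
      refine ae_of_all _ fun x hxa ↦ ?_
      have hpos : 0 < x := lt_of_lt_of_le hx₀ (le_of_lt (lt_of_le_of_lt hax hxa))
      refine ENNReal.ofReal_le_ofReal ?_
      by_contra hcon
      have hle : gammaPDFReal s₂ ρ x ≤ gammaPDFReal s₁ ρ x := le_of_not_ge hcon
      have hxK : x ^ (s₂ - s₁) ≤ K := (gammaPDFReal_le_iff h1 h12 hρ hpos).mp hle
      have hx₀x : x₀ < x := lt_of_le_of_lt hax hxa
      have : x ≤ x₀ := (Real.le_rpow_inv_iff_of_pos hpos.le hK.le hδ).mpr hxK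
      exact absurd this (not_le.mpr hx₀x)
    have hc1 : gammaMeasure s₁ ρ (Set.Iic a) = 1 - gammaMeasure s₁ ρ (Set.Ioi a) := by
      rw [← Set.compl_Ioi, measure_compl measurableSet_Ioi (measure_ne_top _ _),
        measure_univ]
    have hc2 : gammaMeasure s₂ ρ (Set.Iic a) = 1 - gammaMeasure s₂ ρ (Set.Ioi a) := by
      rw [← Set.compl_Ioi, measure_compl measurableSet_Ioi (measure_ne_top _ _),
        measure_univ]
    rw [hc1, hc2]
    exact tsub_le_tsub_left hIoi 1

open ProbabilityTheory in
lemma gammaMeasure_Iic_anti_toReal {s₁ s₂ ρ : ℝ} (h1 : 0 < s₁) (h12 : s₁ ≤ s₂) (hρ : 0 < ρ)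
    (a : ℝ) :
    (gammaMeasure s₂ ρ (Set.Iic a)).toReal ≤ (gammaMeasure s₁ ρ (Set.Iic a)).toReal := by
  haveI := isProbabilityMeasure_gammaMeasure h1 hρ
  exact ENNReal.toReal_mono (measure_ne_top _ _) (gammaMeasure_Iic_anti h1 h12 hρ a)

/-- For `0 < q ≤ r` and `a > 0`, the CDF of the chi-squared distribution
with `r` degrees of freedom at `a` is at most the CDF of the chi-squared distribution with
`q` degrees of freedom at `a`; equivalently, the regularized lower incomplete gamma
function `P_G(s, a)` (the Gamma CDF with rate 1) is nonincreasing in the shape `s > 0`. -/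
theorem chiSq_cdf_antitone_in_dof :
    (∀ q r a : ℝ, 0 < q → q ≤ r → 0 < a →
      (chiSq r (Set.Iic a)).toReal ≤ (chiSq q (Set.Iic a)).toReal) ∧
    (∀ s₁ s₂ a : ℝ, 0 < s₁ → s₁ ≤ s₂ → 0 < a →
      (ProbabilityTheory.gammaMeasure s₂ 1 (Set.Iic a)).toReal ≤
        (ProbabilityTheory.gammaMeasure s₁ 1 (Set.Iic a)).toReal) := by
  constructor
  · intro q r a hq hqr _
    exact gammaMeasure_Iic_anti_toReal (by linarith) (by linarith) (by norm_num) a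
  · intro s₁ s₂ a h1 h12 _
    exact gammaMeasure_Iic_anti_toReal h1 h12 one_pos a

end DIG
end

section
/- For any observed samples (x_1^n, y_1^n, z_1^n) with n > k over a finite alphabet 𝒳, the maximum over all factorized transition probability matrices Q_φ = Q1(X_{k+1},Z_{k+1}|X_1^k,Y_1^k,Z_1^k)·Q2(Y_{k+1}|Y_1^k,Z_1^{k+1}) of the log-likelihood L_n^φ is attained and equals (n−k)·[Ĥ(X_1^k,Y_1^k,Z_1^k) − Ĥ(X_1^{k+1},Y_1^k,Z_1^{k+1}) + Ĥ(Y_1^k,Z_1^{k+1}) − Ĥ(Y_1^{k+1},Z_1^{k+1})], where Ĥ denotes the Shannon entropy of the corresponding marginal of the empirical (k+1)-block distribution P̂^{(n)}. -/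
open MeasureTheory Filter Finset
open scoped BigOperators Topology ENNReal NNReal Classical

namespace DIG


section AuxMLE

open Finset

/-- log t ≤ t - 1 based per-term bound. -/
lemma term_bound {c q r : ℝ} (hc : 0 ≤ c) (hq : 0 ≤ q) (hr : 0 < r)
    (hpos : 0 < c → 0 < q) :
    c * Real.log q ≤ c * Real.log (c / r) + (q * r - c) := by
  rcases eq_or_lt_of_le hc with h | h
  · simp [← h]
    positivity
  · have hq' := hpos h
    have h1 : Real.log q - Real.log (c / r) = Real.log (q * r / c) := by
      rw [Real.log_div (by positivity : (q*r) ≠ 0) (ne_of_gt h),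
        Real.log_mul (ne_of_gt hq') (ne_of_gt hr),
        Real.log_div (ne_of_gt h) (ne_of_gt hr)]
      ring
    have h2 : Real.log (q * r / c) ≤ q * r / c - 1 := Real.log_le_sub_one_of_pos (by positivity)
    have h3 : c * (Real.log q - Real.log (c / r)) ≤ c * (q * r / c - 1) := by
      rw [h1]; exact mul_le_mul_of_nonneg_left h2 hc
    have h4 : c * (q * r / c - 1) = q * r - c := by field_simp
    nlinarith [h3, h4]

/-- Gibbs inequality per row. -/
lemma gibbs_row {T : Type*} [Fintype T] (c q : T → ℝ) (hc : ∀ t, 0 ≤ c t)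
    (hq : ∀ t, 0 ≤ q t) (hq1 : ∑ t, q t ≤ 1) (hpos : ∀ t, 0 < c t → 0 < q t) :
    ∑ t, c t * Real.log (q t) ≤ ∑ t, c t * Real.log (c t / (∑ t', c t')) := by
  set r := ∑ t', c t' with hr
  rcases eq_or_lt_of_le (Finset.sum_nonneg (fun t _ => hc t)) with h0 | h0
  · have hall : ∀ t, c t = 0 := by
      intro t
      exact Finset.sum_eq_zero_iff_of_nonneg (fun t _ => hc t) |>.1 h0.symm t (mem_univ t)
    simp [hall]
  · have key : ∀ t, c t * Real.log (q t) ≤ c t * Real.log (c t / r) + (q t * r - c t) :=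
      fun t => term_bound (hc t) (hq t) h0 (hpos t)
    calc ∑ t, c t * Real.log (q t)
        ≤ ∑ t, (c t * Real.log (c t / r) + (q t * r - c t)) :=
          Finset.sum_le_sum (fun t _ => key t)
      _ = ∑ t, c t * Real.log (c t / r) + ((∑ t, q t) * r - r) := by
          rw [Finset.sum_add_distrib, Finset.sum_sub_distrib, ← Finset.sum_mul, hr]
      _ ≤ ∑ t, c t * Real.log (c t / r) := by nlinarith

/-- Splitting the log of a quotient against nonnegative weights. -/
lemma log_split {T : Type*} [Fintype T] (c : T → ℝ) (hc : ∀ t, 0 ≤ c t) :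
    ∑ t, c t * Real.log (c t / (∑ t', c t')) =
      ∑ t, c t * Real.log (c t) - (∑ t', c t') * Real.log (∑ t', c t') := by
  have key : ∀ t, c t * Real.log (c t / (∑ t', c t')) =
      c t * Real.log (c t) - c t * Real.log (∑ t', c t') := by
    intro t
    rcases eq_or_lt_of_le (hc t) with h | h
    · simp [← h]
    · have hr : 0 < ∑ t', c t' :=
        lt_of_lt_of_le h (Finset.single_le_sum (fun t _ => hc t) (mem_univ t))
      rw [Real.log_div (ne_of_gt h) (ne_of_gt hr)]; ring
  rw [Finset.sum_congr rfl (fun t _ => key t), Finset.sum_sub_distrib, ← Finset.sum_mul]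

lemma entropy_scale {W : Type*} [Fintype W] (q : W → ℝ) (m : ℝ) (hq : ∀ w, 0 ≤ q w)
    (hsum : ∑ w, q w = 1) (hm : 0 < m) :
    ∑ w, (m * q w) * Real.log (m * q w) =
      m * (∑ w, q w * Real.log (q w)) + m * Real.log m := by
  have key : ∀ w, (m * q w) * Real.log (m * q w) =
      m * (q w * Real.log (q w)) + (m * Real.log m) * q w := by
    intro w
    rcases eq_or_lt_of_le (hq w) with h | h
    · simp [← h]
    · rw [Real.log_mul (ne_of_gt hm) (ne_of_gt h)]; ring
  rw [Finset.sum_congr rfl (fun w _ => key w), Finset.sum_add_distrib, ← Finset.mul_sum,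
    ← Finset.mul_sum, hsum]
  ring

/-- Grouping a sum over indices by the value of a map into a finite type. -/
lemma group_sum {ι W : Type*} [Fintype W] [DecidableEq W] (s : Finset ι) (g : ι → W)
    (F : W → ℝ) :
    ∑ t ∈ s, F (g t) = ∑ w, (∑ t ∈ s, if g t = w then (1:ℝ) else 0) * F w := by
  simp only [Finset.sum_mul, ite_mul, one_mul, zero_mul]
  rw [Finset.sum_comm]
  refine Finset.sum_congr rfl (fun t _ => ?_)
  simp

lemma coe_sum_ereal {ι : Type*} (s : Finset ι) (f : ι → ℝ) :
    ((∑ i ∈ s, f i : ℝ) : EReal) = ∑ i ∈ s, ((f i : ℝ) : EReal) :=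
  map_sum (⟨⟨Real.toEReal, EReal.coe_zero⟩, EReal.coe_add⟩ : ℝ →+ EReal) f s

lemma elog_pos_eq {x : ℝ} (h : 0 < x) : elog x = ((Real.log x : ℝ) : EReal) :=
  if_neg (not_le.2 h)

lemma elog_nonpos_eq {x : ℝ} (h : x ≤ 0) : elog x = (⊥ : EReal) := if_pos h

lemma snoc_eq_iff {α : Type*} {k : ℕ} (f : Fin (k+1) → α) (p : Fin k → α) (v : α) :
    f = Fin.snoc p v ↔ Fin.init f = p ∧ f (Fin.last k) = v := by
  constructor
  · rintro rfl
    simp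
  · rintro ⟨h1, h2⟩
    rw [← h1, ← h2, Fin.snoc_init_self]

/-- `(k+1)`-blocks are pairs of a `k`-block and a last symbol. -/
def snocE (𝒳 : Type*) (k : ℕ) : (Blk 𝒳 k × 𝒳) ≃ Blk 𝒳 (k+1) where
  toFun u := Fin.snoc u.1 u.2
  invFun f := (Fin.init f, f (Fin.last k))
  left_inv u := by simp
  right_inv f := by simp

def eqv1 (𝒳 : Type*) (k : ℕ) :
    ((Blk 𝒳 k × Blk 𝒳 k × Blk 𝒳 k) × (𝒳 × 𝒳)) ≃
      (Blk 𝒳 (k+1) × Blk 𝒳 k × Blk 𝒳 (k+1)) where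
  toFun u := (Fin.snoc u.1.1 u.2.1, u.1.2.1, Fin.snoc u.1.2.2 u.2.2)
  invFun w := ((Fin.init w.1, w.2.1, Fin.init w.2.2), (w.1 (Fin.last k), w.2.2 (Fin.last k)))
  left_inv u := by simp
  right_inv w := by simp

def eqv2 (𝒳 : Type*) (k : ℕ) :
    ((Blk 𝒳 k × Blk 𝒳 (k+1)) × 𝒳) ≃ (Blk 𝒳 (k+1) × Blk 𝒳 (k+1)) where
  toFun u := (Fin.snoc u.1.1 u.2, u.1.2)
  invFun w := ((Fin.init w.1, w.2), w.1 (Fin.last k))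
  left_inv u := by simp
  right_inv w := by simp

end AuxMLE

/-- For any samples with `n > k`, the maximum of the log-likelihood over
all factorized transition probability matrices is attained and equals
`(n−k)·[Ĥ(X₁ᵏ,Y₁ᵏ,Z₁ᵏ) − Ĥ(X₁ᵏ⁺¹,Y₁ᵏ,Z₁ᵏ⁺¹) + Ĥ(Y₁ᵏ,Z₁ᵏ⁺¹) − Ĥ(Y₁ᵏ⁺¹,Z₁ᵏ⁺¹)]`,
entropies of marginals of the empirical `(k+1)`-block distribution. -/
theorem max_loglik_factorized_eq_entropy_expr
    {𝒳 : Type*} [Fintype 𝒳] [DecidableEq 𝒳] [Nonempty 𝒳]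
    (x y z : ℕ → 𝒳) (k n : ℕ) (hn : k < n) :
    IsGreatest
      {L : EReal | ∃ Q : Hist 𝒳 k → Sym 𝒳 → ℝ, IsTransMat Q ∧ IsFactorized Q ∧
        L = loglikSeq Q x y z n}
      (((((n - k : ℕ) : ℝ) *
        (Hent (fun w : Blk 𝒳 k × Blk 𝒳 k × Blk 𝒳 k =>
            margK (empDistSeq x y z k n) w.1 w.2.1 w.2.2) -
          Hent (fun w : Blk 𝒳 (k+1) × Blk 𝒳 k × Blk 𝒳 (k+1) =>
            margXYkZ (empDistSeq x y z k n) w.1 w.2.1 w.2.2) +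
          Hent (fun w : Blk 𝒳 k × Blk 𝒳 (k+1) =>
            margYkZ (empDistSeq x y z k n) w.1 w.2) -
          Hent (fun w : Blk 𝒳 (k+1) × Blk 𝒳 (k+1) =>
            margYZ (empDistSeq x y z k n) w.1 w.2))) : ℝ) : EReal) := by
  classical
  set m : ℕ := n - k with hmdef
  have hm : 0 < m := Nat.sub_pos_of_lt hn
  have hmR : (0:ℝ) < (m:ℝ) := by exact_mod_cast hm
  set P : Blk 𝒳 (k+1) → Blk 𝒳 (k+1) → Blk 𝒳 (k+1) → ℝ := empDistSeq x y z k n with hP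
  set xb : ℕ → Blk 𝒳 (k+1) := fun t => fun j => x (t + j) with hxb
  set yb : ℕ → Blk 𝒳 (k+1) := fun t => fun j => y (t + j) with hyb
  set zb : ℕ → Blk 𝒳 (k+1) := fun t => fun j => z (t + j) with hzb
  set G1 : ℕ → (Hist 𝒳 k) × (𝒳 × 𝒳) := fun t =>
    ((Fin.init (xb t), Fin.init (yb t), Fin.init (zb t)),
      (xb t (Fin.last k), zb t (Fin.last k))) with hG1
  set G2 : ℕ → (Blk 𝒳 k × Blk 𝒳 (k+1)) × 𝒳 := fun t =>
    ((Fin.init (yb t), zb t), yb t (Fin.last k)) with hG2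
  set c1 : (Hist 𝒳 k) → (𝒳 × 𝒳) → ℝ := fun s p =>
    ∑ t ∈ Finset.range m, if G1 t = (s, p) then 1 else 0 with hc1
  set c2 : (Blk 𝒳 k × Blk 𝒳 (k+1)) → 𝒳 → ℝ := fun s v =>
    ∑ t ∈ Finset.range m, if G2 t = (s, v) then 1 else 0 with hc2
  set r1 : Hist 𝒳 k → ℝ := fun s => ∑ p, c1 s p with hr1
  set r2 : (Blk 𝒳 k × Blk 𝒳 (k+1)) → ℝ := fun s => ∑ v, c2 s v with hr2
  -- nonnegativity
  have hPnn : ∀ a b c, 0 ≤ P a b c := by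
    intro a b c
    rw [hP]
    unfold empDistSeq
    apply mul_nonneg (by positivity)
    apply Finset.sum_nonneg
    intro t _
    split <;> norm_num
  have hc1nn : ∀ s p, 0 ≤ c1 s p := by
    intro s p; apply Finset.sum_nonneg; intro t _; split <;> norm_num
  have hc2nn : ∀ s v, 0 ≤ c2 s v := by
    intro s v; apply Finset.sum_nonneg; intro t _; split <;> norm_num
  have hr1nn : ∀ s, 0 ≤ r1 s := fun s => Finset.sum_nonneg fun p _ => hc1nn s p
  have hr2nn : ∀ s, 0 ≤ r2 s := fun s => Finset.sum_nonneg fun v _ => hc2nn s v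
  have hc1r1 : ∀ s p, c1 s p ≤ r1 s :=
    fun s p => Finset.single_le_sum (fun q _ => hc1nn s q) (Finset.mem_univ p)
  have hc2r2 : ∀ s v, c2 s v ≤ r2 s :=
    fun s v => Finset.single_le_sum (fun w _ => hc2nn s w) (Finset.mem_univ v)
  -- the count identity
  have hcount : ∀ a b c : Blk 𝒳 (k+1), (m:ℝ) * P a b c =
      ∑ t ∈ Finset.range m, if (xb t = a ∧ yb t = b ∧ zb t = c) then (1:ℝ) else 0 := by
    intro a b c
    rw [hP]
    unfold empDistSeq
    rw [← hmdef, ← mul_assoc, mul_inv_cancel₀ (ne_of_gt hmR), one_mul]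
    refine Finset.sum_congr rfl (fun t _ => ?_)
    refine if_congr ?_ rfl rfl
    simp only [hxb, hyb, hzb, funext_iff]
    constructor
    · intro h
      exact ⟨fun i => (h i).1, fun i => (h i).2.1, fun i => (h i).2.2⟩
    · intro h i
      exact ⟨h.1 i, h.2.1 i, h.2.2 i⟩
  -- loglik rewrite
  have hLL : ∀ Q : Hist 𝒳 k → Sym 𝒳 → ℝ, loglikSeq Q x y z n =
      ∑ t ∈ Finset.range m,
        elog (Q (Fin.init (xb t), Fin.init (yb t), Fin.init (zb t))
          (xb t (Fin.last k), yb t (Fin.last k), zb t (Fin.last k))) := by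
    intro Q
    unfold loglikSeq
    rw [Finset.sum_Ico_eq_sum_range, ← hmdef]
    refine Finset.sum_congr rfl (fun t _ => ?_)
    have e1 : (fun j : Fin k => x (k + t - k + ↑j)) = Fin.init (xb t) := by
      funext j; simp [hxb, Fin.init, Nat.add_sub_cancel_left]
    have e2 : (fun j : Fin k => y (k + t - k + ↑j)) = Fin.init (yb t) := by
      funext j; simp [hyb, Fin.init, Nat.add_sub_cancel_left]
    have e3 : (fun j : Fin k => z (k + t - k + ↑j)) = Fin.init (zb t) := by
      funext j; simp [hzb, Fin.init, Nat.add_sub_cancel_left]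
    have e4 : x (k + t) = xb t (Fin.last k) := by simp [hxb, Nat.add_comm]
    have e5 : y (k + t) = yb t (Fin.last k) := by simp [hyb, Nat.add_comm]
    have e6 : z (k + t) = zb t (Fin.last k) := by simp [hzb, Nat.add_comm]
    rw [e1, e2, e3, e4, e5, e6]
  -- counts vs marginals
  have hA1 : ∀ (s : Hist 𝒳 k) (p : 𝒳 × 𝒳),
      c1 s p = (m:ℝ) * margXYkZ P (Fin.snoc s.1 p.1) s.2.1 (Fin.snoc s.2.2 p.2) := by
    rintro ⟨hx, hy, hz⟩ ⟨x', z'⟩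
    unfold margXYkZ
    rw [Finset.mul_sum]
    simp only [← hcount]
    rw [Finset.sum_congr rfl (fun yl _ => hcount _ _ _), Finset.sum_comm]
    refine Finset.sum_congr rfl (fun t _ => ?_)
    have key : ∀ yl : 𝒳,
        (xb t = Fin.snoc hx x' ∧ yb t = Fin.snoc hy yl ∧ zb t = Fin.snoc hz z')
          ↔ (G1 t = ((hx, hy, hz), (x', z')) ∧ yb t (Fin.last k) = yl) := by
      intro yl
      rw [snoc_eq_iff, snoc_eq_iff, snoc_eq_iff, hG1]
      simp only [Prod.mk.injEq]
      tauto
    rw [Finset.sum_congr rfl (fun yl _ => if_congr (key yl) rfl rfl)]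
    by_cases hq : G1 t = ((hx, hy, hz), (x', z')) <;> simp [hq]
  have hA2 : ∀ (s : Blk 𝒳 k × Blk 𝒳 (k+1)) (v : 𝒳),
      c2 s v = (m:ℝ) * margYZ P (Fin.snoc s.1 v) s.2 := by
    rintro ⟨hy, zc⟩ v
    unfold margYZ
    rw [Finset.mul_sum, Finset.sum_congr rfl (fun a _ => hcount _ _ _), Finset.sum_comm]
    refine Finset.sum_congr rfl (fun t _ => ?_)
    have step1 : ∑ a : Blk 𝒳 (k+1),
        (if (xb t = a ∧ yb t = Fin.snoc hy v ∧ zb t = zc) then (1:ℝ) else 0)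
          = if (yb t = Fin.snoc hy v ∧ zb t = zc) then (1:ℝ) else 0 := by
      by_cases hq : yb t = Fin.snoc hy v ∧ zb t = zc <;> simp [hq]
    rw [step1]
    refine if_congr ?_ rfl rfl
    rw [snoc_eq_iff, hG2]
    simp only [Prod.mk.injEq]
    tauto
  have hR1 : ∀ s : Hist 𝒳 k, r1 s = (m:ℝ) * margK P s.1 s.2.1 s.2.2 := by
    rintro ⟨hx, hy, hz⟩
    rw [hr1]
    simp only [hA1]
    rw [← Finset.mul_sum]
    congr 1
    unfold margK margXYkZ
    rw [Fintype.sum_prod_type]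
    refine Finset.sum_congr rfl (fun x' _ => ?_)
    exact Finset.sum_comm
  have hR2 : ∀ s : Blk 𝒳 k × Blk 𝒳 (k+1), r2 s = (m:ℝ) * margYkZ P s.1 s.2 := by
    rintro ⟨hy, zc⟩
    rw [hr2]
    simp only [hA2]
    rw [← Finset.mul_sum]
    congr 1
    unfold margYkZ margYZ
    exact Finset.sum_comm
  -- totals
  have hT1 : ∑ s : Hist 𝒳 k, r1 s = (m:ℝ) := by
    rw [hr1]
    simp only [hc1]
    rw [Finset.sum_congr rfl (fun s _ => Finset.sum_comm), Finset.sum_comm]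
    have per : ∀ t : ℕ, ∑ s : Hist 𝒳 k, ∑ p : 𝒳 × 𝒳,
        (if G1 t = (s, p) then (1:ℝ) else 0) = 1 := by
      intro t
      simp [Prod.ext_iff, ite_and, Finset.sum_ite_eq, Fintype.sum_prod_type]
    rw [Finset.sum_congr rfl (fun t _ => per t)]
    simp
  have hT2 : ∑ s : Blk 𝒳 k × Blk 𝒳 (k+1), r2 s = (m:ℝ) := by
    rw [hr2]
    simp only [hc2]
    rw [Finset.sum_congr rfl (fun s _ => Finset.sum_comm), Finset.sum_comm]
    have per : ∀ t : ℕ, ∑ s : Blk 𝒳 k × Blk 𝒳 (k+1), ∑ v : 𝒳,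
        (if G2 t = (s, v) then (1:ℝ) else 0) = 1 := by
      intro t
      simp [Prod.ext_iff, ite_and, Finset.sum_ite_eq, Fintype.sum_prod_type]
    rw [Finset.sum_congr rfl (fun t _ => per t)]
    simp
  -- pmf totals of the marginals
  have hM1sum : ∑ w : Blk 𝒳 (k+1) × Blk 𝒳 k × Blk 𝒳 (k+1), margXYkZ P w.1 w.2.1 w.2.2 = 1 := by
    have h := Equiv.sum_comp (eqv1 𝒳 k) (fun w => margXYkZ P w.1 w.2.1 w.2.2)
    have hmul : (m:ℝ) * ∑ w : Blk 𝒳 (k+1) × Blk 𝒳 k × Blk 𝒳 (k+1),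
        margXYkZ P w.1 w.2.1 w.2.2 = (m:ℝ) := by
      rw [← h, Finset.mul_sum]
      have step : ∀ u : (Hist 𝒳 k) × (𝒳 × 𝒳),
          (m:ℝ) * (fun w : Blk 𝒳 (k+1) × Blk 𝒳 k × Blk 𝒳 (k+1) =>
              margXYkZ P w.1 w.2.1 w.2.2) (eqv1 𝒳 k u) = c1 u.1 u.2 :=
        fun u => (hA1 u.1 u.2).symm
      rw [Finset.sum_congr rfl (fun u _ => step u), Fintype.sum_prod_type]
      simpa only [hr1] using hT1
    exact mul_left_cancel₀ (ne_of_gt hmR) (by rw [hmul, mul_one])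
  have hMKsum : ∑ s : Hist 𝒳 k, margK P s.1 s.2.1 s.2.2 = 1 := by
    have hmul : (m:ℝ) * ∑ s : Hist 𝒳 k, margK P s.1 s.2.1 s.2.2 = (m:ℝ) := by
      rw [Finset.mul_sum, Finset.sum_congr rfl (fun s _ => (hR1 s).symm)]
      exact hT1
    exact mul_left_cancel₀ (ne_of_gt hmR) (by rw [hmul, mul_one])
  have hM2sum : ∑ w : Blk 𝒳 (k+1) × Blk 𝒳 (k+1), margYZ P w.1 w.2 = 1 := by
    have h := Equiv.sum_comp (eqv2 𝒳 k) (fun w => margYZ P w.1 w.2)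
    have hmul : (m:ℝ) * ∑ w : Blk 𝒳 (k+1) × Blk 𝒳 (k+1), margYZ P w.1 w.2 = (m:ℝ) := by
      rw [← h, Finset.mul_sum]
      have step : ∀ u : (Blk 𝒳 k × Blk 𝒳 (k+1)) × 𝒳,
          (m:ℝ) * (fun w : Blk 𝒳 (k+1) × Blk 𝒳 (k+1) => margYZ P w.1 w.2) (eqv2 𝒳 k u)
            = c2 u.1 u.2 :=
        fun u => (hA2 u.1 u.2).symm
      rw [Finset.sum_congr rfl (fun u _ => step u), Fintype.sum_prod_type]
      simpa only [hr2] using hT2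
    exact mul_left_cancel₀ (ne_of_gt hmR) (by rw [hmul, mul_one])
  have hM2rsum : ∑ s : Blk 𝒳 k × Blk 𝒳 (k+1), margYkZ P s.1 s.2 = 1 := by
    have hmul : (m:ℝ) * ∑ s : Blk 𝒳 k × Blk 𝒳 (k+1), margYkZ P s.1 s.2 = (m:ℝ) := by
      rw [Finset.mul_sum, Finset.sum_congr rfl (fun s _ => (hR2 s).symm)]
      exact hT2
    exact mul_left_cancel₀ (ne_of_gt hmR) (by rw [hmul, mul_one])
  -- the central value identity
  have hVAL : (∑ s : Hist 𝒳 k, ∑ p : 𝒳 × 𝒳, c1 s p * Real.log (c1 s p / r1 s)) +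
      (∑ s : Blk 𝒳 k × Blk 𝒳 (k+1), ∑ v : 𝒳, c2 s v * Real.log (c2 s v / r2 s)) =
      (m:ℝ) *
        (Hent (fun w : Blk 𝒳 k × Blk 𝒳 k × Blk 𝒳 k => margK P w.1 w.2.1 w.2.2) -
          Hent (fun w : Blk 𝒳 (k+1) × Blk 𝒳 k × Blk 𝒳 (k+1) => margXYkZ P w.1 w.2.1 w.2.2) +
          Hent (fun w : Blk 𝒳 k × Blk 𝒳 (k+1) => margYkZ P w.1 w.2) -
          Hent (fun w : Blk 𝒳 (k+1) × Blk 𝒳 (k+1) => margYZ P w.1 w.2)) := by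
    have hM1nn : ∀ w : Blk 𝒳 (k+1) × Blk 𝒳 k × Blk 𝒳 (k+1), 0 ≤ margXYkZ P w.1 w.2.1 w.2.2 :=
      fun w => Finset.sum_nonneg fun yl _ => hPnn _ _ _
    have hMKnn : ∀ s : Hist 𝒳 k, 0 ≤ margK P s.1 s.2.1 s.2.2 :=
      fun s => Finset.sum_nonneg fun _ _ => Finset.sum_nonneg fun _ _ =>
        Finset.sum_nonneg fun _ _ => hPnn _ _ _
    have hM2nn : ∀ w : Blk 𝒳 (k+1) × Blk 𝒳 (k+1), 0 ≤ margYZ P w.1 w.2 :=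
      fun w => Finset.sum_nonneg fun _ _ => hPnn _ _ _
    have hM2rnn : ∀ s : Blk 𝒳 k × Blk 𝒳 (k+1), 0 ≤ margYkZ P s.1 s.2 :=
      fun s => Finset.sum_nonneg fun _ _ => Finset.sum_nonneg fun _ _ => hPnn _ _ _
    have hsplit1 : (∑ s : Hist 𝒳 k, ∑ p : 𝒳 × 𝒳, c1 s p * Real.log (c1 s p / r1 s)) =
        (∑ s : Hist 𝒳 k, ∑ p : 𝒳 × 𝒳, c1 s p * Real.log (c1 s p)) -
          ∑ s : Hist 𝒳 k, r1 s * Real.log (r1 s) := by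
      rw [← Finset.sum_sub_distrib]
      exact Finset.sum_congr rfl (fun s _ => log_split (c1 s) (hc1nn s))
    have hsplit2 : (∑ s : Blk 𝒳 k × Blk 𝒳 (k+1), ∑ v : 𝒳, c2 s v * Real.log (c2 s v / r2 s)) =
        (∑ s : Blk 𝒳 k × Blk 𝒳 (k+1), ∑ v : 𝒳, c2 s v * Real.log (c2 s v)) -
          ∑ s : Blk 𝒳 k × Blk 𝒳 (k+1), r2 s * Real.log (r2 s) := by
      rw [← Finset.sum_sub_distrib]
      exact Finset.sum_congr rfl (fun s _ => log_split (c2 s) (hc2nn s))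
    have hE1 : (∑ s : Hist 𝒳 k, ∑ p : 𝒳 × 𝒳, c1 s p * Real.log (c1 s p)) =
        (m:ℝ) * (∑ w : Blk 𝒳 (k+1) × Blk 𝒳 k × Blk 𝒳 (k+1),
          margXYkZ P w.1 w.2.1 w.2.2 * Real.log (margXYkZ P w.1 w.2.1 w.2.2)) +
          (m:ℝ) * Real.log m := by
      rw [← entropy_scale (fun w : Blk 𝒳 (k+1) × Blk 𝒳 k × Blk 𝒳 (k+1) =>
          margXYkZ P w.1 w.2.1 w.2.2) (m:ℝ) (fun w => hM1nn w) hM1sum hmR,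
        ← Equiv.sum_comp (eqv1 𝒳 k) (fun w : Blk 𝒳 (k+1) × Blk 𝒳 k × Blk 𝒳 (k+1) =>
          ((m:ℝ) * margXYkZ P w.1 w.2.1 w.2.2) *
            Real.log ((m:ℝ) * margXYkZ P w.1 w.2.1 w.2.2))]
      have step : ∀ u : (Hist 𝒳 k) × (𝒳 × 𝒳),
          ((m:ℝ) * margXYkZ P ((eqv1 𝒳 k) u).1 ((eqv1 𝒳 k) u).2.1 ((eqv1 𝒳 k) u).2.2) *
            Real.log ((m:ℝ) * margXYkZ P ((eqv1 𝒳 k) u).1 ((eqv1 𝒳 k) u).2.1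
              ((eqv1 𝒳 k) u).2.2) = c1 u.1 u.2 * Real.log (c1 u.1 u.2) := by
        intro u
        simp only [eqv1, Equiv.coe_fn_mk]
        rw [← hA1 u.1 u.2]
      rw [Finset.sum_congr rfl (fun u _ => step u), ← Fintype.sum_prod_type']
    have hEK : (∑ s : Hist 𝒳 k, r1 s * Real.log (r1 s)) =
        (m:ℝ) * (∑ s : Hist 𝒳 k, margK P s.1 s.2.1 s.2.2 * Real.log (margK P s.1 s.2.1 s.2.2)) +
          (m:ℝ) * Real.log m := by
      rw [Finset.sum_congr rfl (fun s _ => by rw [hR1 s])]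
      exact entropy_scale _ (m:ℝ) (fun s => hMKnn s) hMKsum hmR
    have hE2 : (∑ s : Blk 𝒳 k × Blk 𝒳 (k+1), ∑ v : 𝒳, c2 s v * Real.log (c2 s v)) =
        (m:ℝ) * (∑ w : Blk 𝒳 (k+1) × Blk 𝒳 (k+1),
          margYZ P w.1 w.2 * Real.log (margYZ P w.1 w.2)) + (m:ℝ) * Real.log m := by
      rw [← entropy_scale (fun w : Blk 𝒳 (k+1) × Blk 𝒳 (k+1) => margYZ P w.1 w.2) (m:ℝ)
          (fun w => hM2nn w) hM2sum hmR,
        ← Equiv.sum_comp (eqv2 𝒳 k) (fun w : Blk 𝒳 (k+1) × Blk 𝒳 (k+1) =>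
          ((m:ℝ) * margYZ P w.1 w.2) * Real.log ((m:ℝ) * margYZ P w.1 w.2))]
      have step : ∀ u : (Blk 𝒳 k × Blk 𝒳 (k+1)) × 𝒳,
          ((m:ℝ) * margYZ P ((eqv2 𝒳 k) u).1 ((eqv2 𝒳 k) u).2) *
            Real.log ((m:ℝ) * margYZ P ((eqv2 𝒳 k) u).1 ((eqv2 𝒳 k) u).2)
            = c2 u.1 u.2 * Real.log (c2 u.1 u.2) := by
        intro u
        simp only [eqv2, Equiv.coe_fn_mk]
        rw [← hA2 u.1 u.2]
      rw [Finset.sum_congr rfl (fun u _ => step u), ← Fintype.sum_prod_type']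
    have hE2r : (∑ s : Blk 𝒳 k × Blk 𝒳 (k+1), r2 s * Real.log (r2 s)) =
        (m:ℝ) * (∑ s : Blk 𝒳 k × Blk 𝒳 (k+1),
          margYkZ P s.1 s.2 * Real.log (margYkZ P s.1 s.2)) + (m:ℝ) * Real.log m := by
      rw [Finset.sum_congr rfl (fun s _ => by rw [hR2 s])]
      exact entropy_scale _ (m:ℝ) (fun s => hM2rnn s) hM2rsum hmR
    unfold Hent
    rw [hsplit1, hsplit2, hE1, hEK, hE2, hE2r]
    ring
  -- visited points
  have hvis1 : ∀ s p, c1 s p ≠ 0 → ∃ t ∈ Finset.range m, G1 t = (s, p) := by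
    intro s p h
    by_contra hcon
    push_neg at hcon
    exact h (Finset.sum_eq_zero fun t ht => if_neg (hcon t ht))
  have hvis2 : ∀ s v, c2 s v ≠ 0 → ∃ t ∈ Finset.range m, G2 t = (s, v) := by
    intro s v h
    by_contra hcon
    push_neg at hcon
    exact h (Finset.sum_eq_zero fun t ht => if_neg (hcon t ht))
  have hc1pos : ∀ t ∈ Finset.range m, 0 < c1 (G1 t).1 (G1 t).2 := by
    intro t ht
    refine Finset.sum_pos' (fun t' _ => by split <;> norm_num) ⟨t, ht, by simp⟩
  have hc2pos : ∀ t ∈ Finset.range m, 0 < c2 (G2 t).1 (G2 t).2 := by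
    intro t ht
    refine Finset.sum_pos' (fun t' _ => by split <;> norm_num) ⟨t, ht, by simp⟩
  constructor
  · -- membership: the maximizing factorized transition matrix
    set Q1o : Hist 𝒳 k → 𝒳 × 𝒳 → ℝ := fun s p =>
      if 0 < r1 s then c1 s p / r1 s else ((Fintype.card (𝒳 × 𝒳) : ℝ))⁻¹ with hQ1o
    set Q2o : Blk 𝒳 k × Blk 𝒳 (k+1) → 𝒳 → ℝ := fun s v =>
      if 0 < r2 s then c2 s v / r2 s else ((Fintype.card 𝒳 : ℝ))⁻¹ with hQ2o
    set Qo : Hist 𝒳 k → Sym 𝒳 → ℝ := fun h s =>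
      Q1o h (s.1, s.2.2) * Q2o (h.2.1, Fin.snoc h.2.2 s.2.2) s.2.1 with hQo
    have hQ1onn : ∀ s p, 0 ≤ Q1o s p := by
      intro s p
      simp only [hQ1o]
      split
      · exact div_nonneg (hc1nn s p) (hr1nn s)
      · positivity
    have hQ2onn : ∀ s v, 0 ≤ Q2o s v := by
      intro s v
      simp only [hQ2o]
      split
      · exact div_nonneg (hc2nn s v) (hr2nn s)
      · positivity
    have hQ1osum : ∀ s, ∑ p, Q1o s p = 1 := by
      intro s
      simp only [hQ1o]
      split
      · rw [← Finset.sum_div]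
        exact div_self (ne_of_gt (by assumption))
      · rw [Finset.sum_const, Finset.card_univ, nsmul_eq_mul]
        exact mul_inv_cancel₀ (by exact_mod_cast Fintype.card_ne_zero)
    have hQ2osum : ∀ s, ∑ v, Q2o s v = 1 := by
      intro s
      simp only [hQ2o]
      split
      · rw [← Finset.sum_div]
        exact div_self (ne_of_gt (by assumption))
      · rw [Finset.sum_const, Finset.card_univ, nsmul_eq_mul]
        exact mul_inv_cancel₀ (by exact_mod_cast Fintype.card_ne_zero)
    have hQ1opos : ∀ s p, 0 < c1 s p → 0 < Q1o s p := by
      intro s p h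
      have hr : 0 < r1 s := lt_of_lt_of_le h (hc1r1 s p)
      simp only [hQ1o, if_pos hr]
      exact div_pos h hr
    have hQ2opos : ∀ s v, 0 < c2 s v → 0 < Q2o s v := by
      intro s v h
      have hr : 0 < r2 s := lt_of_lt_of_le h (hc2r2 s v)
      simp only [hQ2o, if_pos hr]
      exact div_pos h hr
    have hQonn : ∀ h s, 0 ≤ Qo h s := fun h s => mul_nonneg (hQ1onn _ _) (hQ2onn _ _)
    have hQosum : ∀ h, ∑ s : Sym 𝒳, Qo h s = 1 := by
      intro h
      rw [Fintype.sum_prod_type]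
      have hper : ∀ a : 𝒳, ∑ b : 𝒳 × 𝒳, Qo h (a, b) = ∑ z' : 𝒳, Q1o h (a, z') := by
        intro a
        rw [Fintype.sum_prod_type, Finset.sum_comm]
        refine Finset.sum_congr rfl (fun z' _ => ?_)
        simp only [hQo]
        rw [← Finset.mul_sum, hQ2osum, mul_one]
      rw [Finset.sum_congr rfl (fun a _ => hper a), ← Fintype.sum_prod_type']
      exact hQ1osum h
    have hvalue : loglikSeq Qo x y z n =
        (((∑ s : Hist 𝒳 k, ∑ p : 𝒳 × 𝒳, c1 s p * Real.log (c1 s p / r1 s)) +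
          (∑ s : Blk 𝒳 k × Blk 𝒳 (k+1), ∑ v : 𝒳, c2 s v * Real.log (c2 s v / r2 s)) : ℝ) :
            EReal) := by
      rw [hLL Qo]
      have hterm : ∀ t ∈ Finset.range m,
          elog (Qo (Fin.init (xb t), Fin.init (yb t), Fin.init (zb t))
            (xb t (Fin.last k), yb t (Fin.last k), zb t (Fin.last k))) =
          (((Real.log (Q1o (G1 t).1 (G1 t).2) + Real.log (Q2o (G2 t).1 (G2 t).2)) : ℝ) :
            EReal) := by
        intro t ht
        have h1 : 0 < Q1o (G1 t).1 (G1 t).2 := hQ1opos _ _ (hc1pos t ht)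
        have h2 : 0 < Q2o (G2 t).1 (G2 t).2 := hQ2opos _ _ (hc2pos t ht)
        have hQoeq : Qo (Fin.init (xb t), Fin.init (yb t), Fin.init (zb t))
            (xb t (Fin.last k), yb t (Fin.last k), zb t (Fin.last k)) =
            Q1o (G1 t).1 (G1 t).2 * Q2o (G2 t).1 (G2 t).2 := by
          simp only [hQo, hG1, hG2]
          rw [Fin.snoc_init_self]
        rw [hQoeq, elog_pos_eq (mul_pos h1 h2), Real.log_mul (ne_of_gt h1) (ne_of_gt h2)]
      rw [Finset.sum_congr rfl hterm, ← coe_sum_ereal]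
      congr 1
      rw [Finset.sum_add_distrib]
      congr 1
      · rw [group_sum (Finset.range m) G1 (fun u => Real.log (Q1o u.1 u.2))]
        have step : ∀ w : (Hist 𝒳 k) × (𝒳 × 𝒳),
            (∑ t ∈ Finset.range m, if G1 t = w then (1:ℝ) else 0) *
              Real.log (Q1o w.1 w.2) = c1 w.1 w.2 * Real.log (c1 w.1 w.2 / r1 w.1) := by
          intro w
          have hcw : (∑ t ∈ Finset.range m, if G1 t = w then (1:ℝ) else 0) = c1 w.1 w.2 := rfl
          rw [hcw]
          rcases eq_or_lt_of_le (hc1nn w.1 w.2) with h0 | h0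
          · rw [← h0]; ring
          · have hr : 0 < r1 w.1 := lt_of_lt_of_le h0 (hc1r1 w.1 w.2)
            simp only [hQ1o, if_pos hr]
        rw [Finset.sum_congr rfl (fun w _ => step w), Fintype.sum_prod_type]
      · rw [group_sum (Finset.range m) G2 (fun u => Real.log (Q2o u.1 u.2))]
        have step : ∀ w : (Blk 𝒳 k × Blk 𝒳 (k+1)) × 𝒳,
            (∑ t ∈ Finset.range m, if G2 t = w then (1:ℝ) else 0) *
              Real.log (Q2o w.1 w.2) = c2 w.1 w.2 * Real.log (c2 w.1 w.2 / r2 w.1) := by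
          intro w
          have hcw : (∑ t ∈ Finset.range m, if G2 t = w then (1:ℝ) else 0) = c2 w.1 w.2 := rfl
          rw [hcw]
          rcases eq_or_lt_of_le (hc2nn w.1 w.2) with h0 | h0
          · rw [← h0]; ring
          · have hr : 0 < r2 w.1 := lt_of_lt_of_le h0 (hc2r2 w.1 w.2)
            simp only [hQ2o, if_pos hr]
        rw [Finset.sum_congr rfl (fun w _ => step w), Fintype.sum_prod_type]
    refine ⟨Qo, ⟨hQonn, hQosum⟩,
      ⟨Q1o, Q2o, hQ1onn, hQ1osum, hQ2onn, hQ2osum, fun hx hy hz x' y' z' => rfl⟩, ?_⟩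
    rw [hvalue, hVAL]
  · -- upper bound
    rintro L ⟨Q, hQT, hQF, rfl⟩
    obtain ⟨Q1, Q2, hQ1nn, hQ1sum, hQ2nn, hQ2sum, hfac⟩ := hQF
    have hfac' : ∀ t, Q (Fin.init (xb t), Fin.init (yb t), Fin.init (zb t))
        (xb t (Fin.last k), yb t (Fin.last k), zb t (Fin.last k)) =
        Q1 (G1 t).1 (G1 t).2 * Q2 (G2 t).1 (G2 t).2 := by
      intro t
      rw [hfac]
      simp only [hG1, hG2, Fin.snoc_init_self]
    rw [hLL Q, Finset.sum_congr rfl (fun t _ => by rw [hfac' t])]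
    by_cases hall : ∀ t ∈ Finset.range m, 0 < Q1 (G1 t).1 (G1 t).2 * Q2 (G2 t).1 (G2 t).2
    · -- all visited transition probabilities positive
      have hpos1t : ∀ t ∈ Finset.range m, 0 < Q1 (G1 t).1 (G1 t).2 := by
        intro t ht
        have hp := hall t ht
        rcases (hQ1nn (G1 t).1 (G1 t).2).lt_or_eq with h | h
        · exact h
        · exfalso; rw [← h] at hp; simp at hp
      have hpos2t : ∀ t ∈ Finset.range m, 0 < Q2 (G2 t).1 (G2 t).2 := by
        intro t ht
        have hp := hall t ht
        rcases (hQ2nn (G2 t).1 (G2 t).2).lt_or_eq with h | h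
        · exact h
        · exfalso; rw [← h] at hp; simp at hp
      have hterm : ∀ t ∈ Finset.range m,
          elog (Q1 (G1 t).1 (G1 t).2 * Q2 (G2 t).1 (G2 t).2) =
          (((Real.log (Q1 (G1 t).1 (G1 t).2) + Real.log (Q2 (G2 t).1 (G2 t).2)) : ℝ) :
            EReal) := by
        intro t ht
        rw [elog_pos_eq (hall t ht),
          Real.log_mul (ne_of_gt (hpos1t t ht)) (ne_of_gt (hpos2t t ht))]
      rw [Finset.sum_congr rfl hterm, ← coe_sum_ereal, EReal.coe_le_coe_iff, ← hVAL,
        Finset.sum_add_distrib]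
      have hpos1 : ∀ (s : Hist 𝒳 k) (p : 𝒳 × 𝒳), 0 < c1 s p → 0 < Q1 s p := by
        intro s p hp
        obtain ⟨t, ht, hG⟩ := hvis1 s p (ne_of_gt hp)
        have h := hpos1t t ht
        rw [hG] at h
        exact h
      have hpos2 : ∀ (s : Blk 𝒳 k × Blk 𝒳 (k+1)) (v : 𝒳), 0 < c2 s v → 0 < Q2 s v := by
        intro s v hp
        obtain ⟨t, ht, hG⟩ := hvis2 s v (ne_of_gt hp)
        have h := hpos2t t ht
        rw [hG] at h
        exact h
      refine add_le_add ?_ ?_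
      · rw [group_sum (Finset.range m) G1 (fun u => Real.log (Q1 u.1 u.2))]
        calc (∑ w : (Hist 𝒳 k) × (𝒳 × 𝒳),
              (∑ t ∈ Finset.range m, if G1 t = w then (1:ℝ) else 0) *
                Real.log (Q1 w.1 w.2))
            = ∑ s : Hist 𝒳 k, ∑ p : 𝒳 × 𝒳, c1 s p * Real.log (Q1 s p) := by
              exact Fintype.sum_prod_type _
          _ ≤ ∑ s : Hist 𝒳 k, ∑ p : 𝒳 × 𝒳, c1 s p * Real.log (c1 s p / r1 s) :=
              Finset.sum_le_sum (fun s _ => gibbs_row (c1 s) (Q1 s) (hc1nn s) (hQ1nn s)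
                (le_of_eq (hQ1sum s)) (hpos1 s))
      · rw [group_sum (Finset.range m) G2 (fun u => Real.log (Q2 u.1 u.2))]
        calc (∑ w : (Blk 𝒳 k × Blk 𝒳 (k+1)) × 𝒳,
              (∑ t ∈ Finset.range m, if G2 t = w then (1:ℝ) else 0) *
                Real.log (Q2 w.1 w.2))
            = ∑ s : Blk 𝒳 k × Blk 𝒳 (k+1), ∑ v : 𝒳, c2 s v * Real.log (Q2 s v) := by
              exact Fintype.sum_prod_type _
          _ ≤ ∑ s : Blk 𝒳 k × Blk 𝒳 (k+1), ∑ v : 𝒳, c2 s v * Real.log (c2 s v / r2 s) :=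
              Finset.sum_le_sum (fun s _ => gibbs_row (c2 s) (Q2 s) (hc2nn s) (hQ2nn s)
                (le_of_eq (hQ2sum s)) (hpos2 s))
    · -- some visited transition probability vanishes: the log-likelihood is ⊥
      push_neg at hall
      obtain ⟨t, ht, hle⟩ := hall
      rw [← Finset.add_sum_erase _ _ ht, elog_nonpos_eq hle, EReal.bot_add]
      exact bot_le

end DIG
end

section
/- At every parameter point (γ, γ′) for which all entries of the stochastic matrices Q1_γ and Q2_{γ′} are strictly positive, the Jacobian matrix K(φ) of the product parametrization h(γ,γ′) — whose (u, f) entry is the partial derivative of the transition probability Q_{h(γ,γ′)}(u′_x,u′_y,u′_z | u_{x,1}^k,u_{y,1}^k,u_{z,1}^k) with respect to the f-th free parameter of (γ, γ′) — has full column rank d + d′, where d = |𝒳|^{3k}(|𝒳|²−1) and d′ = |𝒳|^{2k+1}(|𝒳|−1). -/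
open MeasureTheory Filter Finset
open scoped BigOperators Topology ENNReal NNReal Classical

namespace DIG

variable {𝒳 : Type*} [Fintype 𝒳] [DecidableEq 𝒳] [Nonempty 𝒳]

/-- Free-parameter index set for `Q1`: pairs `(x',z')` except the distinguished `(e,e)`. -/
abbrev PairIdx (𝒳 : Type*) (e : 𝒳) := {p : 𝒳 × 𝒳 // p ≠ (e, e)}

/-- Free-parameter index set for `Q2`: symbols except the distinguished `e`. -/
abbrev SymIdx (𝒳 : Type*) (e : 𝒳) := {y : 𝒳 // y ≠ e}

/-- The stochastic matrix `Q1_γ`, filled in from its free parameters `γ`: the entry at the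
distinguished column `(e,e)` is `1` minus the sum of the free entries of its row. -/
noncomputable def Q1full {k : ℕ} (e : 𝒳) (γ : Hist 𝒳 k → PairIdx 𝒳 e → ℝ)
    (h : Hist 𝒳 k) (p : 𝒳 × 𝒳) : ℝ :=
  if hp : p = (e, e) then 1 - ∑ p' : PairIdx 𝒳 e, γ h p' else γ h ⟨p, hp⟩

/-- The stochastic matrix `Q2_{γ′}`, filled in from its free parameters `γ′`. -/
noncomputable def Q2full {k : ℕ} (e : 𝒳) (γ' : Blk 𝒳 k × Blk 𝒳 (k+1) → SymIdx 𝒳 e → ℝ)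
    (h : Blk 𝒳 k × Blk 𝒳 (k+1)) (y : 𝒳) : ℝ :=
  if hy : y = e then 1 - ∑ y' : SymIdx 𝒳 e, γ' h y' else γ' h ⟨y, hy⟩

/-- The product parametrization `h(γ,γ′)`:
`Q(x',y',z' | hx,hy,hz) = Q1_γ(x',z' | hx,hy,hz) · Q2_{γ′}(y' | hy,(hz,z'))`. -/
noncomputable def hParam (k : ℕ) (e : 𝒳)
    (gg : (Hist 𝒳 k → PairIdx 𝒳 e → ℝ) × (Blk 𝒳 k × Blk 𝒳 (k+1) → SymIdx 𝒳 e → ℝ)) :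
    Hist 𝒳 k → Sym 𝒳 → ℝ :=
  fun h s => Q1full e gg.1 h (s.1, s.2.2) * Q2full e gg.2 (h.2.1, Fin.snoc h.2.2 s.2.2) s.2.1

section Aux

variable {k : ℕ}

/-- Directional derivative of `Q1full` with respect to the free parameters. -/
noncomputable def dQ1 (e : 𝒳) (δ : Hist 𝒳 k → PairIdx 𝒳 e → ℝ)
    (h : Hist 𝒳 k) (p : 𝒳 × 𝒳) : ℝ :=
  if hp : p = (e, e) then -∑ p' : PairIdx 𝒳 e, δ h p' else δ h ⟨p, hp⟩

/-- Directional derivative of `Q2full` with respect to the free parameters. -/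
noncomputable def dQ2 (e : 𝒳) (δ' : Blk 𝒳 k × Blk 𝒳 (k+1) → SymIdx 𝒳 e → ℝ)
    (h : Blk 𝒳 k × Blk 𝒳 (k+1)) (y : 𝒳) : ℝ :=
  if hy : y = e then -∑ y' : SymIdx 𝒳 e, δ' h y' else δ' h ⟨y, hy⟩

lemma Q1full_eq_add (e : 𝒳) (γ : Hist 𝒳 k → PairIdx 𝒳 e → ℝ) (h : Hist 𝒳 k) (p : 𝒳 × 𝒳) :
    Q1full e γ h p = (if p = (e, e) then (1:ℝ) else 0) + dQ1 e γ h p := by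
  unfold Q1full dQ1; split_ifs <;> ring

lemma Q2full_eq_add (e : 𝒳) (γ' : Blk 𝒳 k × Blk 𝒳 (k+1) → SymIdx 𝒳 e → ℝ)
    (h : Blk 𝒳 k × Blk 𝒳 (k+1)) (y : 𝒳) :
    Q2full e γ' h y = (if y = e then (1:ℝ) else 0) + dQ2 e γ' h y := by
  unfold Q2full dQ2; split_ifs <;> ring

lemma sum_dQ2 (e : 𝒳) (δ' : Blk 𝒳 k × Blk 𝒳 (k+1) → SymIdx 𝒳 e → ℝ)
    (h : Blk 𝒳 k × Blk 𝒳 (k+1)) : ∑ y : 𝒳, dQ2 e δ' h y = 0 := by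
  classical
  rw [← Finset.add_sum_erase Finset.univ _ (Finset.mem_univ e)]
  have h1 : dQ2 e δ' h e = -∑ y' : SymIdx 𝒳 e, δ' h y' := dif_pos rfl
  have h2 : ∑ y ∈ Finset.univ.erase e, dQ2 e δ' h y = ∑ y' : SymIdx 𝒳 e, δ' h y' := by
    rw [Finset.sum_subtype (p := fun y => y ≠ e) (Finset.univ.erase e) (by simp) (dQ2 e δ' h)]
    exact Finset.sum_congr rfl fun y _ => by simp [dQ2, y.prop]
  rw [h1, h2]; ring

lemma sum_Q2full (e : 𝒳) (γ' : Blk 𝒳 k × Blk 𝒳 (k+1) → SymIdx 𝒳 e → ℝ)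
    (h : Blk 𝒳 k × Blk 𝒳 (k+1)) : ∑ y : 𝒳, Q2full e γ' h y = 1 := by
  classical
  simp_rw [Q2full_eq_add]
  rw [Finset.sum_add_distrib, sum_dQ2]
  simp

/-- The linear map `δ ↦ dQ1 e δ h p` on the full parameter space. -/
noncomputable def L1 (e : 𝒳) (h : Hist 𝒳 k) (p : 𝒳 × 𝒳) :
    ((Hist 𝒳 k → PairIdx 𝒳 e → ℝ) × (Blk 𝒳 k × Blk 𝒳 (k+1) → SymIdx 𝒳 e → ℝ)) →L[ℝ] ℝ :=
  if hp : p = (e, e) then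
    -∑ p' : PairIdx 𝒳 e, (ContinuousLinearMap.proj p').comp
      ((ContinuousLinearMap.proj h).comp (ContinuousLinearMap.fst ℝ _ _))
  else (ContinuousLinearMap.proj (R := ℝ) (φ := fun _ : PairIdx 𝒳 e => ℝ) ⟨p, hp⟩).comp
      ((ContinuousLinearMap.proj h).comp (ContinuousLinearMap.fst ℝ _ _))

/-- The linear map `δ' ↦ dQ2 e δ' c y` on the full parameter space. -/
noncomputable def L2 (e : 𝒳) (c : Blk 𝒳 k × Blk 𝒳 (k+1)) (y : 𝒳) :
    ((Hist 𝒳 k → PairIdx 𝒳 e → ℝ) × (Blk 𝒳 k × Blk 𝒳 (k+1) → SymIdx 𝒳 e → ℝ)) →L[ℝ] ℝ :=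
  if hy : y = e then
    -∑ y' : SymIdx 𝒳 e, (ContinuousLinearMap.proj y').comp
      ((ContinuousLinearMap.proj c).comp (ContinuousLinearMap.snd ℝ _ _))
  else (ContinuousLinearMap.proj (R := ℝ) (φ := fun _ : SymIdx 𝒳 e => ℝ) ⟨y, hy⟩).comp
      ((ContinuousLinearMap.proj c).comp (ContinuousLinearMap.snd ℝ _ _))

lemma L1_apply (e : 𝒳) (h : Hist 𝒳 k) (p : 𝒳 × 𝒳)
    (gg : (Hist 𝒳 k → PairIdx 𝒳 e → ℝ) × (Blk 𝒳 k × Blk 𝒳 (k+1) → SymIdx 𝒳 e → ℝ)) :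
    L1 e h p gg = dQ1 e gg.1 h p := by
  unfold L1 dQ1; split_ifs with hp <;> simp

lemma L2_apply (e : 𝒳) (c : Blk 𝒳 k × Blk 𝒳 (k+1)) (y : 𝒳)
    (gg : (Hist 𝒳 k → PairIdx 𝒳 e → ℝ) × (Blk 𝒳 k × Blk 𝒳 (k+1) → SymIdx 𝒳 e → ℝ)) :
    L2 e c y gg = dQ2 e gg.2 c y := by
  unfold L2 dQ2; split_ifs with hy <;> simp

/-- The explicit derivative of the coordinate `(h,s)` of `hParam` at `(γ, γ')`. -/
noncomputable def Dphi (e : 𝒳) (γ : Hist 𝒳 k → PairIdx 𝒳 e → ℝ)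
    (γ' : Blk 𝒳 k × Blk 𝒳 (k+1) → SymIdx 𝒳 e → ℝ) (h : Hist 𝒳 k) (s : Sym 𝒳) :
    ((Hist 𝒳 k → PairIdx 𝒳 e → ℝ) × (Blk 𝒳 k × Blk 𝒳 (k+1) → SymIdx 𝒳 e → ℝ)) →L[ℝ] ℝ :=
  Q1full e γ h (s.1, s.2.2) • L2 e (h.2.1, Fin.snoc h.2.2 s.2.2) s.2.1
    + Q2full e γ' (h.2.1, Fin.snoc h.2.2 s.2.2) s.2.1 • L1 e h (s.1, s.2.2)

lemma hasFDerivAt_hParam (e : 𝒳) (γ : Hist 𝒳 k → PairIdx 𝒳 e → ℝ)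
    (γ' : Blk 𝒳 k × Blk 𝒳 (k+1) → SymIdx 𝒳 e → ℝ) :
    HasFDerivAt (hParam k e (𝒳 := 𝒳))
      (ContinuousLinearMap.pi fun h => ContinuousLinearMap.pi fun s => Dphi e γ γ' h s)
      (γ, γ') := by
  have H : ∀ (h : Hist 𝒳 k) (s : Sym 𝒳),
      HasFDerivAt (fun gg : (Hist 𝒳 k → PairIdx 𝒳 e → ℝ) ×
          (Blk 𝒳 k × Blk 𝒳 (k+1) → SymIdx 𝒳 e → ℝ) => hParam k e gg h s)
        (Dphi e γ γ' h s) (γ, γ') := by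
    intro h s
    have h1 : HasFDerivAt (fun gg : (Hist 𝒳 k → PairIdx 𝒳 e → ℝ) ×
        (Blk 𝒳 k × Blk 𝒳 (k+1) → SymIdx 𝒳 e → ℝ) => Q1full e gg.1 h (s.1, s.2.2))
        (L1 e h (s.1, s.2.2)) (γ, γ') := by
      have heq : (fun gg : (Hist 𝒳 k → PairIdx 𝒳 e → ℝ) ×
          (Blk 𝒳 k × Blk 𝒳 (k+1) → SymIdx 𝒳 e → ℝ) => Q1full e gg.1 h (s.1, s.2.2))
          = fun gg => (if (s.1, s.2.2) = (e, e) then (1:ℝ) else 0) + L1 e h (s.1, s.2.2) gg := by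
        funext gg; rw [Q1full_eq_add, L1_apply]
      rw [heq]
      exact (L1 e h (s.1, s.2.2)).hasFDerivAt.const_add _
    have h2 : HasFDerivAt (fun gg : (Hist 𝒳 k → PairIdx 𝒳 e → ℝ) ×
        (Blk 𝒳 k × Blk 𝒳 (k+1) → SymIdx 𝒳 e → ℝ) =>
          Q2full e gg.2 (h.2.1, Fin.snoc h.2.2 s.2.2) s.2.1)
        (L2 e (h.2.1, Fin.snoc h.2.2 s.2.2) s.2.1) (γ, γ') := by
      have heq : (fun gg : (Hist 𝒳 k → PairIdx 𝒳 e → ℝ) ×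
          (Blk 𝒳 k × Blk 𝒳 (k+1) → SymIdx 𝒳 e → ℝ) =>
            Q2full e gg.2 (h.2.1, Fin.snoc h.2.2 s.2.2) s.2.1)
          = fun gg => (if s.2.1 = e then (1:ℝ) else 0)
              + L2 e (h.2.1, Fin.snoc h.2.2 s.2.2) s.2.1 gg := by
        funext gg; rw [Q2full_eq_add, L2_apply]
      rw [heq]
      exact (L2 e (h.2.1, Fin.snoc h.2.2 s.2.2) s.2.1).hasFDerivAt.const_add _
    exact h1.mul h2
  exact hasFDerivAt_pi.2 fun h => hasFDerivAt_pi.2 fun s => H h s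

end Aux

/-- At every parameter point with strictly positive entries of `Q1_γ` and
`Q2_{γ′}`, the Jacobian of the product parametrization has full column rank `d + d′`:
the derivative is injective, and the parameter space has dimension
`d + d′ = |𝒳|^{3k}(|𝒳|²−1) + |𝒳|^{2k+1}(|𝒳|−1)`. -/
theorem jacobian_full_column_rank (k : ℕ) (e : 𝒳)
    (γ : Hist 𝒳 k → PairIdx 𝒳 e → ℝ) (γ' : Blk 𝒳 k × Blk 𝒳 (k+1) → SymIdx 𝒳 e → ℝ)
    (hpos1 : ∀ h p, 0 < Q1full e γ h p) (hpos2 : ∀ h y, 0 < Q2full e γ' h y) :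
    Function.Injective (fderiv ℝ (hParam k e (𝒳 := 𝒳)) (γ, γ')) ∧
    Module.finrank ℝ
        ((Hist 𝒳 k → PairIdx 𝒳 e → ℝ) × (Blk 𝒳 k × Blk 𝒳 (k+1) → SymIdx 𝒳 e → ℝ))
      = Fintype.card 𝒳 ^ (3 * k) * (Fintype.card 𝒳 ^ 2 - 1)
        + Fintype.card 𝒳 ^ (2 * k + 1) * (Fintype.card 𝒳 - 1) := by
  constructor
  · -- injectivity of the derivative
    rw [(hasFDerivAt_hParam e γ γ').fderiv]
    intro a b hab
    have hsub : (ContinuousLinearMap.pi fun h =>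
        ContinuousLinearMap.pi fun s => Dphi e γ γ' h s) (a - b) = 0 := by
      rw [map_sub, hab, sub_self]
    set δ := a.1 - b.1 with hδdef
    set δ' := a.2 - b.2 with hδ'def
    have hab1 : (a - b).1 = δ := rfl
    have hab2 : (a - b).2 = δ' := rfl
    have hcoord : ∀ (h : Hist 𝒳 k) (s : Sym 𝒳),
        Q1full e γ h (s.1, s.2.2) * dQ2 e δ' (h.2.1, Fin.snoc h.2.2 s.2.2) s.2.1
          + Q2full e γ' (h.2.1, Fin.snoc h.2.2 s.2.2) s.2.1 * dQ1 e δ h (s.1, s.2.2) = 0 := by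
      intro h s
      have := congrFun (congrFun hsub h) s
      simpa [ContinuousLinearMap.pi_apply, Dphi, ContinuousLinearMap.add_apply,
        ContinuousLinearMap.smul_apply, L1_apply, L2_apply, hab1, hab2,
        smul_eq_mul] using this
    have hδ : ∀ (h : Hist 𝒳 k) (p : 𝒳 × 𝒳), dQ1 e δ h p = 0 := by
      intro h p
      have key : ∑ y : 𝒳,
          (Q1full e γ h (p.1, p.2) * dQ2 e δ' (h.2.1, Fin.snoc h.2.2 p.2) y
            + Q2full e γ' (h.2.1, Fin.snoc h.2.2 p.2) y * dQ1 e δ h (p.1, p.2)) = 0 :=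
        Finset.sum_eq_zero fun y _ => by simpa using hcoord h (p.1, y, p.2)
      rw [Finset.sum_add_distrib, ← Finset.mul_sum, sum_dQ2, ← Finset.sum_mul,
        sum_Q2full] at key
      simpa using key
    have hδ0 : δ = 0 := by
      funext h i
      have := hδ h i.val
      simpa [dQ1, i.prop] using this
    have hδ' : ∀ (c : Blk 𝒳 k × Blk 𝒳 (k+1)) (y : 𝒳), dQ2 e δ' c y = 0 := by
      intro c y
      obtain ⟨β, cb⟩ := c
      have hc := hcoord ((fun _ => Classical.arbitrary 𝒳), β, Fin.init cb)
        (Classical.arbitrary 𝒳, y, cb (Fin.last k))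
      simp only [Fin.snoc_init_self] at hc
      rw [hδ, mul_zero, add_zero] at hc
      exact (mul_eq_zero.mp hc).resolve_left (ne_of_gt (hpos1 _ _))
    have hδ'0 : δ' = 0 := by
      funext c i
      have := hδ' c i.val
      simpa [dQ2, i.prop] using this
    have hab0 : a - b = 0 := by
      have h1 : (a - b) = (δ, δ') := rfl
      rw [h1, hδ0, hδ'0]
      rfl
    exact sub_eq_zero.mp hab0
  · -- dimension count
    rw [Module.finrank_prod]
    have f1 : Module.finrank ℝ (Hist 𝒳 k → PairIdx 𝒳 e → ℝ)
        = Fintype.card (Hist 𝒳 k) * Fintype.card (PairIdx 𝒳 e) := by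
      rw [Module.finrank_pi_fintype]
      simp [Module.finrank_fintype_fun_eq_card, Finset.sum_const, mul_comm]
    have f2 : Module.finrank ℝ (Blk 𝒳 k × Blk 𝒳 (k+1) → SymIdx 𝒳 e → ℝ)
        = Fintype.card (Blk 𝒳 k × Blk 𝒳 (k+1)) * Fintype.card (SymIdx 𝒳 e) := by
      rw [Module.finrank_pi_fintype]
      simp [Module.finrank_fintype_fun_eq_card, Finset.sum_const, mul_comm]
    have c1 : Fintype.card (Hist 𝒳 k) = Fintype.card 𝒳 ^ (3 * k) := by
      simp only [Fintype.card_prod, Fintype.card_fun, Fintype.card_fin]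
      rw [← pow_add, ← pow_add]; congr 1; ring
    have c2 : Fintype.card (PairIdx 𝒳 e) = Fintype.card 𝒳 ^ 2 - 1 := by
      simp [Fintype.card_subtype_compl, Fintype.card_prod, sq]
    have c3 : Fintype.card (Blk 𝒳 k × Blk 𝒳 (k+1)) = Fintype.card 𝒳 ^ (2 * k + 1) := by
      simp only [Fintype.card_prod, Fintype.card_fun, Fintype.card_fin]
      rw [← pow_add]; congr 1; ring
    have c4 : Fintype.card (SymIdx 𝒳 e) = Fintype.card 𝒳 - 1 := by
      simp [Fintype.card_subtype_compl]
    rw [f1, f2, c1, c2, c3, c4]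

end DIG
end
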